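/- arXiv:1704.06974 — 2 statements merged into one kernel-verified Lean document; each statement's English description precedes it below -/
import Mathlib

section
/- Let N, m, n be positive integers, let P be a symmetric real N×N matrix and b a real N×m matrix. Let U be the N×(mn) snapshot matrix whose k-th block column (k = 0,…,n−1) is T_k(P) b. Suppose U = V Lᵀ, where V is N×(mn) with orthonormal columns (Vᵀ V = I_{mn}) and L ∈ ℝ^{mn×mn} is invertible and block lower triangular with respect to the m×m block structure (its (k,l) block L_{k,l} is the zero m×m matrix whenever l > k). Then the reduced order propagator P̃ = Vᵀ P V is block tridiagonal: its (k,l) m×m block P̃_{k,l} is the zero matrix whenever |k − l| ≥ 2. -/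
open Matrix Polynomial

/-- Evaluation of the Chebyshev polynomial of the first kind at a square matrix. -/
noncomputable def chebMat {I : Type*} [Fintype I] [DecidableEq I]
    (P : Matrix I I ℝ) (k : ℤ) : Matrix I I ℝ :=
  Polynomial.aeval P (Polynomial.Chebyshev.T ℝ k)

/-- Chebyshev recurrence at a matrix. -/
lemma chebMat_rec {I : Type*} [Fintype I] [DecidableEq I] (P : Matrix I I ℝ) (l : ℤ) :
    (2 : ℝ) • (P * chebMat P l) = chebMat P (l+1) + chebMat P (l-1) := by
  have h := Polynomial.Chebyshev.T_add_two ℝ (l-1)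
  have h2 : Chebyshev.T ℝ (l+1) + Chebyshev.T ℝ (l-1) = 2 * X * Chebyshev.T ℝ l := by
    rw [show l - 1 + 2 = l + 1 by ring, show l - 1 + 1 = l by ring] at h
    linear_combination h
  have h3 := congrArg (Polynomial.aeval P) h2
  simp only [map_add, _root_.map_mul, map_ofNat, aeval_X] at h3
  unfold chebMat
  rw [h3, two_smul]
  ext i j
  simp [Matrix.mul_apply, Matrix.add_apply, Finset.sum_mul, two_mul, add_mul,
    Finset.sum_add_distrib]

/-- `T` is even, at the matrix level. -/
lemma chebMat_natAbs {I : Type*} [Fintype I] [DecidableEq I] (P : Matrix I I ℝ) (s : ℤ) :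
    chebMat P s = chebMat P (s.natAbs : ℕ) := by
  unfold chebMat
  congr 1
  rcases le_or_gt 0 s with h | h
  · rw [Int.natAbs_of_nonneg h]
  · rw [show ((s.natAbs : ℕ) : ℤ) = -s by omega, Polynomial.Chebyshev.T_neg]

theorem stmt2 (N m n : ℕ) (hN : 0 < N) (hm : 0 < m) (hn : 0 < n)
    (P : Matrix (Fin N) (Fin N) ℝ) (hP : P.IsSymm)
    (b : Matrix (Fin N) (Fin m) ℝ)
    (U V : Matrix (Fin N) (Fin n × Fin m) ℝ)
    (hU : U = Matrix.of fun i (p : Fin n × Fin m) => (chebMat P (p.1 : ℕ) * b) i p.2)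
    (L : Matrix (Fin n × Fin m) (Fin n × Fin m) ℝ)
    (hQR : U = V * Lᵀ)
    (hV : Vᵀ * V = 1)
    (hLinv : IsUnit L)
    (hLtri : ∀ k l : Fin n, (k : ℕ) < l → ∀ i j : Fin m, L (k, i) (l, j) = 0) :
    ∀ k l : Fin n, ((k : ℕ) + 2 ≤ l ∨ (l : ℕ) + 2 ≤ k) →
      ∀ i j : Fin m, (Vᵀ * P * V) (k, i) (l, j) = 0 := by
  have hVU : Vᵀ * U = Lᵀ := by
    rw [hQR, ← Matrix.mul_assoc, hV, Matrix.one_mul]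
  -- key orthogonality: Vᵀ (T_s(P) b) vanishes in block rows above s
  have key1 : ∀ (s k : Fin n), (s : ℕ) < (k : ℕ) → ∀ (i j : Fin m),
      (Vᵀ * (chebMat P ((s : ℕ) : ℤ) * b)) (k, i) j = 0 := by
    intro s k hsk i j
    have e1 : (Vᵀ * (chebMat P ((s : ℕ) : ℤ) * b)) (k, i) j = (Vᵀ * U) (k, i) (s, j) := by
      simp [Matrix.mul_apply, hU]
    rw [e1, hVU, Matrix.transpose_apply]
    exact hLtri s k hsk j i
  have key2 : ∀ (s : ℤ) (k : Fin n), s.natAbs < (k : ℕ) → ∀ (i j : Fin m),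
      (Vᵀ * (chebMat P s * b)) (k, i) j = 0 := by
    intro s k hs i j
    rw [chebMat_natAbs]
    have hsn : s.natAbs < n := lt_trans hs k.2
    simpa using key1 ⟨s.natAbs, hsn⟩ k hs i j
  -- Vᵀ P U vanishes at block (k, l') when l' + 2 ≤ k
  have key3 : ∀ (k l' : Fin n), (l' : ℕ) + 2 ≤ (k : ℕ) → ∀ (i j : Fin m),
      (Vᵀ * P * U) (k, i) (l', j) = 0 := by
    intro k l' h i j
    have e1 : (Vᵀ * P * U) (k, i) (l', j)
        = ((Vᵀ * P) * (chebMat P ((l' : ℕ) : ℤ) * b)) (k, i) j := by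
      simp [Matrix.mul_apply, hU]
    have e1' : (Vᵀ * P) * (chebMat P ((l' : ℕ) : ℤ) * b)
        = Vᵀ * (P * chebMat P ((l' : ℕ) : ℤ) * b) := by
      rw [Matrix.mul_assoc P _ b, Matrix.mul_assoc]
    rw [e1'] at e1
    have e2 : (Vᵀ * (chebMat P (((l' : ℕ) : ℤ) + 1) * b)) (k, i) j
          + (Vᵀ * (chebMat P (((l' : ℕ) : ℤ) - 1) * b)) (k, i) j
        = (2 : ℝ) * (Vᵀ * (P * chebMat P ((l' : ℕ) : ℤ) * b)) (k, i) j := by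
      rw [← Matrix.add_apply, ← Matrix.mul_add, ← Matrix.add_mul, ← chebMat_rec,
        Matrix.smul_mul, Matrix.mul_smul, Matrix.smul_apply, smul_eq_mul]
    rw [key2 (((l' : ℕ) : ℤ) + 1) k (by omega) i j,
      key2 (((l' : ℕ) : ℤ) - 1) k (by omega) i j] at e2
    rw [e1]
    linarith
  -- invertibility of Lᵀ
  have hdet : IsUnit Lᵀ.det := by
    rw [Matrix.det_transpose]
    exact (Matrix.isUnit_iff_isUnit_det L).mp hLinv
  haveI : Invertible Lᵀ := Matrix.invertibleOfIsUnitDet _ hdet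
  have hVeq : V = U * Lᵀ⁻¹ := by
    rw [hQR, Matrix.mul_assoc, Matrix.mul_nonsing_inv _ hdet, Matrix.mul_one]
  have hTriT : Lᵀ.BlockTriangular (fun p : Fin n × Fin m => (p.1 : ℕ)) := by
    intro p q hpq
    simpa using hLtri q.1 p.1 hpq q.2 p.2
  have hTriInv : Lᵀ⁻¹.BlockTriangular (fun p : Fin n × Fin m => (p.1 : ℕ)) :=
    Matrix.blockTriangular_inv_of_blockTriangular hTriT
  have e : Vᵀ * P * V = (Vᵀ * P * U) * Lᵀ⁻¹ := by
    rw [Matrix.mul_assoc (Vᵀ * P), ← hVeq]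
  -- main case: l + 2 ≤ k
  have main : ∀ (k l : Fin n), (l : ℕ) + 2 ≤ (k : ℕ) → ∀ (i j : Fin m),
      (Vᵀ * P * V) (k, i) (l, j) = 0 := by
    intro k l h i j
    rw [e, Matrix.mul_apply]
    apply Finset.sum_eq_zero
    rintro ⟨l', j'⟩ -
    rcases le_or_gt (l' : ℕ) (l : ℕ) with hle | hlt
    · rw [key3 k l' (by omega) i j', zero_mul]
    · rw [hTriInv hlt, mul_zero]
  have hsymm : (Vᵀ * P * V)ᵀ = Vᵀ * P * V := by
    rw [Matrix.transpose_mul, Matrix.transpose_mul, Matrix.transpose_transpose, hP.eq,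
      ← Matrix.mul_assoc]
  intro k l hkl i j
  rcases hkl with h | h
  · have h0 := main l k h j i
    calc (Vᵀ * P * V) (k, i) (l, j) = (Vᵀ * P * V)ᵀ (l, j) (k, i) := rfl
      _ = 0 := by rw [hsymm]; exact h0
  · exact main k l h i j
end

section
/- Let P be a symmetric real N×N matrix and b a real N×m matrix, and write D^k = bᵀ T_k(P) b. Then for all integers n ≥ 1 and l ≥ 0, D^{n−1+l} = 2 · (T_{n−1}(P) b)ᵀ (T_l(P) b) − D^{|n−1−l|}. -/
open Matrix Polynomial

lemma aeval_transpose {I : Type*} [Fintype I] [DecidableEq I]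
    (P : Matrix I I ℝ) (p : ℝ[X]) :
    (Polynomial.aeval P p)ᵀ = Polynomial.aeval Pᵀ p := by
  induction p using Polynomial.induction_on' with
  | add p q hp hq => simp [hp, hq]
  | monomial k a =>
      simp [Polynomial.aeval_monomial, Matrix.transpose_mul, Matrix.transpose_pow,
        Matrix.algebraMap_eq_diagonal, Matrix.diagonal_mul, Matrix.mul_diagonal]
      ext i j
      simp [Matrix.mul_apply, Matrix.diagonal, mul_comm]

lemma chebMat_symm {I : Type*} [Fintype I] [DecidableEq I]
    (P : Matrix I I ℝ) (hP : P.IsSymm) (k : ℤ) : (chebMat P k)ᵀ = chebMat P k := by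
  rw [chebMat, aeval_transpose, hP]

lemma chebMat_key {I : Type*} [Fintype I] [DecidableEq I]
    (P : Matrix I I ℝ) (a c : ℤ) :
    chebMat P (a + c) = (2 : ℝ) • (chebMat P a * chebMat P c) - chebMat P (a - c) := by
  have h : Polynomial.Chebyshev.T ℝ (a + c) + Polynomial.Chebyshev.T ℝ (a - c)
      = Polynomial.Chebyshev.T ℝ a * Polynomial.Chebyshev.T ℝ c
        + Polynomial.Chebyshev.T ℝ a * Polynomial.Chebyshev.T ℝ c := by
    rw [← Polynomial.Chebyshev.T_mul_T]; ring
  have h2 := congrArg (Polynomial.aeval P) h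
  simp only [map_add, _root_.map_mul] at h2
  unfold chebMat
  rw [two_smul, ← h2]
  abel

theorem stmt15 (N m : ℕ) (P : Matrix (Fin N) (Fin N) ℝ) (hP : P.IsSymm)
    (b : Matrix (Fin N) (Fin m) ℝ) (n : ℕ) (hn : 1 ≤ n) (l : ℕ) :
    bᵀ * chebMat P (n - 1 + l) * b =
      (2 : ℝ) • ((chebMat P (n - 1) * b)ᵀ * (chebMat P l * b)) -
        bᵀ * chebMat P |(n : ℤ) - 1 - l| * b := by
  have habs : chebMat P |(n : ℤ) - 1 - l| = chebMat P ((n : ℤ) - 1 - l) := by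
    unfold chebMat
    rcases abs_choice ((n : ℤ) - 1 - l) with h | h
    · rw [h]
    · rw [h, Polynomial.Chebyshev.T_neg]
  rw [habs, chebMat_key P ((n : ℤ) - 1) l, Matrix.transpose_mul,
    chebMat_symm P hP]
  simp only [Matrix.sub_mul, Matrix.mul_sub, Matrix.smul_mul, Matrix.mul_smul,
    Matrix.mul_assoc]
end
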